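/- Let 𝖬 ∈ ℝ^{3×3} be symmetric and define 𝖬̄ := (1/2)(tr(𝖬)I₃ − 𝖬). Then for every R ∈ SO(3), ψ(𝖬R)ᵀψ(R) = ψ(R)ᵀ 𝖬̄ ψ(R). In particular, if 𝖬̄ is positive definite with smallest eigenvalue λ_m > 0, then ψ(𝖬R)ᵀψ(R) ≥ λ_m ‖ψ(R)‖² for all R ∈ SO(3). -/

import Mathlib

open Matrix

noncomputable section

/-- `SO(3)`: rotation matrices. -/
def SO3 (R : Matrix (Fin 3) (Fin 3) ℝ) : Prop :=
  R * Rᵀ = 1 ∧ Rᵀ * R = 1 ∧ R.det = 1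

/-- `ψ(A) = (1/2)(a₃₂ - a₂₃, a₁₃ - a₃₁, a₂₁ - a₁₂)ᵀ`. -/
def psiMap (A : Matrix (Fin 3) (Fin 3) ℝ) : Fin 3 → ℝ :=
  ![(A 2 1 - A 1 2) / 2, (A 0 2 - A 2 0) / 2, (A 1 0 - A 0 1) / 2]

/-- Auxiliary: the smallest-eigenvalue lower bound on the quadratic form. -/
lemma quad_lower_bound (A : Matrix (Fin 3) (Fin 3) ℝ) (hA : A.IsHermitian) (lm : ℝ)
    (hlb : ∀ i, lm ≤ hA.eigenvalues i) (x : Fin 3 → ℝ) :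
    lm * ∑ i, (x i) ^ 2 ≤ x ⬝ᵥ (A *ᵥ x) := by
  have hU : (hA.eigenvectorUnitary : Matrix (Fin 3) (Fin 3) ℝ) ∈ unitaryGroup (Fin 3) ℝ :=
    hA.eigenvectorUnitary.2
  set U : Matrix (Fin 3) (Fin 3) ℝ := (hA.eigenvectorUnitary : Matrix (Fin 3) (Fin 3) ℝ) with hUdef
  have hD : PosSemidef (diagonal (fun i => hA.eigenvalues i - lm)) :=
    PosSemidef.diagonal (fun i => sub_nonneg.mpr (hlb i))
  have hconj : PosSemidef (U * diagonal (fun i => hA.eigenvalues i - lm) * Uᴴ) :=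
    hD.mul_mul_conjTranspose_same U
  have hkey : U * diagonal (fun i => hA.eigenvalues i - lm) * Uᴴ = A - lm • 1 := by
    have hsub : diagonal (fun i => hA.eigenvalues i - lm)
        = diagonal (RCLike.ofReal ∘ hA.eigenvalues) - lm • (1 : Matrix (Fin 3) (Fin 3) ℝ) := by
      rw [smul_one_eq_diagonal, ← diagonal_sub]
      rfl
    have hst := hA.spectral_theorem
    rw [Unitary.conjStarAlgAut_apply, Matrix.star_eq_conjTranspose] at hst
    rw [hsub, Matrix.mul_sub, Matrix.sub_mul, ← hst]
    congr 1
    rw [Matrix.mul_smul, Matrix.smul_mul, Matrix.mul_one]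
    congr 1
    have := mem_unitaryGroup_iff.mp hU
    rwa [Matrix.star_eq_conjTranspose] at this
  rw [hkey] at hconj
  have h2 := hconj.dotProduct_mulVec_nonneg x
  have hstar : star x = x := by
    funext i; simp
  rw [hstar] at h2
  have hexp : x ⬝ᵥ ((A - lm • 1) *ᵥ x) = x ⬝ᵥ (A *ᵥ x) - lm * ∑ i, (x i) ^ 2 := by
    rw [Matrix.sub_mulVec, dotProduct_sub, smul_mulVec, one_mulVec,
      dotProduct_smul, smul_eq_mul, dotProduct]
    congr 1
    congr 1
    exact Finset.sum_congr rfl fun i _ => (sq (x i)).symm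
  rw [hexp] at h2
  linarith

/-- `ψ(𝖬R)ᵀψ(R) = ψ(R)ᵀ𝖬̄ψ(R)` with `𝖬̄ = (tr(𝖬)I₃ - 𝖬)/2`; in
particular if `𝖬̄` is positive definite with smallest eigenvalue `λ_m > 0`, then
`ψ(𝖬R)ᵀψ(R) ≥ λ_m ‖ψ(R)‖²`. -/
theorem psi_quadratic_form
    (Mmat : Matrix (Fin 3) (Fin 3) ℝ) (hMsym : Mmatᵀ = Mmat)
    (Mbar : Matrix (Fin 3) (Fin 3) ℝ)
    (hMbar : Mbar = (1/2 : ℝ) • (Matrix.trace Mmat • (1 : Matrix (Fin 3) (Fin 3) ℝ) - Mmat)) :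
    (∀ R : Matrix (Fin 3) (Fin 3) ℝ, SO3 R →
      psiMap (Mmat * R) ⬝ᵥ psiMap R = psiMap R ⬝ᵥ (Mbar *ᵥ psiMap R)) ∧
    (∀ lm : ℝ, 0 < lm → Mbar.PosDef →
      ∀ (hHerm : Mbar.IsHermitian),
        ((∀ i, lm ≤ hHerm.eigenvalues i) ∧ (∃ i, hHerm.eigenvalues i = lm)) →
      ∀ R : Matrix (Fin 3) (Fin 3) ℝ, SO3 R →
        lm * ∑ i, (psiMap R i) ^ 2 ≤ psiMap (Mmat * R) ⬝ᵥ psiMap R) := by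
  have key : ∀ R : Matrix (Fin 3) (Fin 3) ℝ, SO3 R →
      psiMap (Mmat * R) ⬝ᵥ psiMap R = psiMap R ⬝ᵥ (Mbar *ᵥ psiMap R) := by
    intro R ⟨hA, hB, _⟩
    have hs : ∀ i j, Mmat j i = Mmat i j := fun i j => by
      conv_lhs => rw [← hMsym]
      rfl
    have c00 := congrFun (congrFun hA 0) 0
    have c01 := congrFun (congrFun hA 0) 1
    have c02 := congrFun (congrFun hA 0) 2
    have c11 := congrFun (congrFun hA 1) 1
    have c12 := congrFun (congrFun hA 1) 2
    have c22 := congrFun (congrFun hA 2) 2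
    have d00 := congrFun (congrFun hB 0) 0
    have d01 := congrFun (congrFun hB 0) 1
    have d02 := congrFun (congrFun hB 0) 2
    have d11 := congrFun (congrFun hB 1) 1
    have d12 := congrFun (congrFun hB 1) 2
    have d22 := congrFun (congrFun hB 2) 2
    simp only [Matrix.mul_apply, Fin.sum_univ_three, Matrix.transpose_apply,
      Matrix.one_apply_eq, Matrix.one_apply_ne, ne_eq, Fin.reduceEq,
      not_false_eq_true] at c00 c01 c02 c11 c12 c22 d00 d01 d02 d11 d12 d22
    simp only [psiMap, dotProduct, mulVec, hMbar, Matrix.mul_apply, Fin.sum_univ_three,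
      Matrix.trace, Matrix.diag, Matrix.smul_apply, Matrix.sub_apply, Matrix.one_apply,
      smul_eq_mul, Matrix.cons_val_zero, Matrix.cons_val_one, Matrix.head_cons,
      Matrix.cons_val_two, Matrix.tail_cons, Fin.isValue, if_true, if_false,
      Fin.reduceEq, Matrix.smul_of, Matrix.of_apply]
    rw [hs 0 1, hs 0 2, hs 1 2]
    ring_nf
    linear_combination (norm := ring_nf)
      ((Mmat 0 0 - Mmat 2 2) / 8) * (c00 - d00) + (Mmat 0 1 / 4) * (c01 - d01) +
      (Mmat 0 2 / 4) * (c02 - d02) + ((Mmat 1 1 - Mmat 2 2) / 8) * (c11 - d11) +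
      (Mmat 1 2 / 4) * (c12 - d12)
  refine ⟨key, ?_⟩
  intro lm _ _ hHerm ⟨hlb, _⟩ R hR
  rw [key R hR]
  exact quad_lower_bound Mbar hHerm lm hlb (psiMap R)
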